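/- Let n ≥ 1 and let λ, μ ∈ Par_n with μ ⊆ λ, and let i, j, k satisfy 1 ≤ i ≤ k ≤ j ≤ n, with μ_j ≤ μ_k < λ_k ≤ λ_i. Then the plethystic entry h_{λ_i−μ_j−i+j}[−A_{λ_i−1}+A_{μ_j}+B_{i−1}−B_{j−1}] equals (−1)^{λ_i−μ_j−i+j}·e_{λ_i−μ_j−i+j}(α_{μ_j+1},…,α_{λ_i−1},β_i,…,β_{j−1}), and this is zero because the number of listed variables, (λ_i−1−μ_j)+(j−i), is strictly less than λ_i−μ_j−i+j... correction: equals (λ_i−μ_j−1)+(j−i) = λ_i−μ_j−i+j−1 < λ_i−μ_j−i+j. Hence the entry vanishes. -/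
import Mathlib


/-- Vanishing of the entry (eq. `R_ij = 0`): with `1 ≤ i ≤ k ≤ j ≤ n` and
`μ_j ≤ μ_k < λ_k ≤ λ_i`, setting `m = λ_i − μ_j − i + j`, the entry
`h_m[−A_{λ_i−1}+A_{μ_j}+B_{i−1}−B_{j−1}]
  = (−1)^m·e_m(α_{μ_j+1},…,α_{λ_i−1},β_i,…,β_{j−1})`
vanishes, since the number of listed variables is `m − 1 < m`. -/
theorem plethystic_entry_vanishes {R : Type*} [CommRing R]
    (alpha beta : ℕ → R) (n i j k li lk mj mk : ℕ)
    (h1 : 1 ≤ i) (hik : i ≤ k) (hkj : k ≤ j) (hjn : j ≤ n)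
    (h2 : mj ≤ mk) (h3 : mk < lk) (h4 : lk ≤ li) :
    (-1 : R) ^ (li + j - mj - i) *
      (((Finset.Icc (mj + 1) (li - 1)).val.map alpha) +
        ((Finset.Icc i (j - 1)).val.map beta)).esymm (li + j - mj - i) = 0 := by
  have hcard : Multiset.card (((Finset.Icc (mj + 1) (li - 1)).val.map alpha) +
        ((Finset.Icc i (j - 1)).val.map beta)) < li + j - mj - i := by
    simp [Nat.card_Icc]
    omega
  rw [Multiset.esymm, Multiset.powersetCard_eq_empty _ hcard]
  simp
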